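/- Let p and q be distinct primes and let G be a solvable-by-finite group (i.e. G has a solvable normal subgroup of finite index). If G is both a residually finite p-group and a residually finite q-group, then G has a finite series 1 = G₀ ⊴ G₁ ⊴ ⋯ ⊴ Gₙ = G in which each Gᵢ is normal in G and each quotient G_{i+1}/G_i is torsion-free abelian. -/

import Mathlib

/-- A group `G` is a residually finite `p`-group if for every `g ≠ 1` there is a
normal subgroup `N` of `G` with `g ∉ N` such that `G/N` is a finite `p`-group. -/
def IsResiduallyFinitePGroup (p : ℕ) (G : Type*) [Group G] : Prop :=
  ∀ g : G, g ≠ 1 → ∃ (N : Subgroup G) (hN : N.Normal), g ∉ N ∧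
    (letI := hN; Finite (G ⧸ N) ∧ IsPGroup p (G ⧸ N))

namespace Stmt4Aux

open Subgroup

variable {G : Type*} [Group G]

/-- `N` is the kernel of a finite `r`-group quotient of `G`. -/
def PKer (r : ℕ) (N : Subgroup G) : Prop :=
  ∃ hN : N.Normal, (letI := hN; Finite (G ⧸ N) ∧ IsPGroup r (G ⧸ N))

/-- The closure of `X` in the pro-`r` topology of `G`. -/
def clP (r : ℕ) (X : Subgroup G) : Subgroup G :=
  ⨅ (N : Subgroup G) (_ : PKer r N), X ⊔ N

lemma mem_clP {r : ℕ} {X : Subgroup G} {x : G} :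
    x ∈ clP r X ↔ ∀ N : Subgroup G, PKer r N → x ∈ X ⊔ N := by
  simp [clP, Subgroup.mem_iInf]

lemma le_clP (r : ℕ) (X : Subgroup G) : X ≤ clP r X :=
  le_iInf fun _ => le_iInf fun _ => le_sup_left

lemma clP_mono {r : ℕ} {X Y : Subgroup G} (h : X ≤ Y) : clP r X ≤ clP r Y := by
  refine le_iInf fun N => le_iInf fun hN => ?_
  exact le_trans (iInf₂_le N hN) (sup_le_sup_right h N)

lemma clP_bot_eq {r : ℕ} (hr : IsResiduallyFinitePGroup r G) :
    clP r (⊥ : Subgroup G) = ⊥ := by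
  refine le_antisymm ?_ bot_le
  intro x hx
  rw [Subgroup.mem_bot]
  by_contra hx1
  obtain ⟨N, hN, hxN, h2⟩ := hr x hx1
  have : x ∈ (⊥ : Subgroup G) ⊔ N := mem_clP.mp hx N ⟨hN, h2⟩
  rw [bot_sup_eq] at this
  exact hxN this

/-- A normal subgroup closed in both the pro-`p` and the pro-`q` topology. -/
def BiC (p q : ℕ) (T : Subgroup G) : Prop :=
  T.Normal ∧ clP p T ≤ T ∧ clP q T ≤ T

/-- The bi-closure of a subgroup: the smallest normal subgroup containing it that is
closed in both topologies. -/
def bcl (p q : ℕ) (S : Subgroup G) : Subgroup G :=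
  ⨅ (T : Subgroup G) (_ : BiC p q T ∧ S ≤ T), T

lemma mem_bcl {p q : ℕ} {S : Subgroup G} {x : G} :
    x ∈ bcl p q S ↔ ∀ T : Subgroup G, BiC p q T → S ≤ T → x ∈ T := by
  simp [bcl, Subgroup.mem_iInf, and_imp]

lemma bcl_le {p q : ℕ} {S T : Subgroup G} (hT : BiC p q T) (hST : S ≤ T) :
    bcl p q S ≤ T :=
  iInf₂_le T ⟨hT, hST⟩

lemma le_bcl (p q : ℕ) (S : Subgroup G) : S ≤ bcl p q S :=
  le_iInf fun _ => le_iInf fun h => h.2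

lemma bcl_mono {p q : ℕ} {S S' : Subgroup G} (h : S ≤ S') : bcl p q S ≤ bcl p q S' :=
  le_iInf fun T => le_iInf fun hT => bcl_le hT.1 (h.trans hT.2)

lemma bcl_normal (p q : ℕ) (S : Subgroup G) : (bcl p q S).Normal := by
  constructor
  intro n hn g
  rw [mem_bcl] at hn ⊢
  intro T hT hST
  exact hT.1.conj_mem n (hn T hT hST) g

lemma bcl_biC (p q : ℕ) (S : Subgroup G) : BiC p q (bcl p q S) := by
  refine ⟨bcl_normal p q S, ?_, ?_⟩
  · refine le_iInf fun T => le_iInf fun hT => ?_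
    exact le_trans (clP_mono (bcl_le hT.1 hT.2)) hT.1.2.1
  · refine le_iInf fun T => le_iInf fun hT => ?_
    exact le_trans (clP_mono (bcl_le hT.1 hT.2)) hT.1.2.2

lemma bcl_bot (p q : ℕ) (hrp : IsResiduallyFinitePGroup p G)
    (hrq : IsResiduallyFinitePGroup q G) : bcl p q (⊥ : Subgroup G) = ⊥ := by
  refine le_antisymm (bcl_le ⟨inferInstance, ?_, ?_⟩ le_rfl) bot_le
  · rw [clP_bot_eq hrp]
  · rw [clP_bot_eq hrq]

lemma bcl_top (p q : ℕ) : bcl p q (⊤ : Subgroup G) = ⊤ :=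
  top_le_iff.mp (le_bcl p q ⊤)

/-- Decomposition of an element of `X ⊔ N` for `N` normal. -/
lemma exists_mul_of_mem_sup {X N : Subgroup G} (hN : N.Normal) {x : G}
    (hx : x ∈ X ⊔ N) : ∃ c ∈ X, ∃ n ∈ N, x = c * n := by
  haveI := hN
  have hx' : x ∈ (↑(X ⊔ N) : Set G) := hx
  rw [Subgroup.mul_normal] at hx'
  obtain ⟨c, hc, n, hn, h⟩ := hx'
  exact ⟨c, hc, n, hn, h.symm⟩

lemma normal_sup {T N : Subgroup G} (hT : T.Normal) (hN : N.Normal) : (T ⊔ N).Normal := by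
  constructor
  intro x hx g
  obtain ⟨t, ht, n, hn, rfl⟩ := exists_mul_of_mem_sup hN hx
  have key : g * (t * n) * g⁻¹ = (g * t * g⁻¹) * (g * n * g⁻¹) := by group
  rw [key]
  exact mul_mem (le_sup_left (α := Subgroup G) (a := T) (b := N) (hT.conj_mem t ht g))
    (le_sup_right (α := Subgroup G) (a := T) (b := N) (hN.conj_mem n hn g))

/-- The subgroup of elements commuting with `S` modulo `T`. -/
def commC (S T : Subgroup G) (hT : T.Normal) : Subgroup G where
  carrier := {x : G | ∀ s ∈ S, x * s * x⁻¹ * s⁻¹ ∈ T}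
  one_mem' := by
    intro s hs
    have h1 : (1 : G) * s * 1⁻¹ * s⁻¹ = 1 := by group
    rw [h1]; exact T.one_mem
  mul_mem' := by
    intro a b ha hb s hs
    have key : (a * b) * s * (a * b)⁻¹ * s⁻¹ =
        (a * (b * s * b⁻¹ * s⁻¹) * a⁻¹) * (a * s * a⁻¹ * s⁻¹) := by group
    rw [key]
    exact mul_mem (hT.conj_mem _ (hb s hs) a) (ha s hs)
  inv_mem' := by
    intro a ha s hs
    have key : a⁻¹ * s * (a⁻¹)⁻¹ * s⁻¹ = a⁻¹ * (a * s * a⁻¹ * s⁻¹)⁻¹ * (a⁻¹)⁻¹ := by group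
    rw [key]
    exact hT.conj_mem _ (T.inv_mem (ha s hs)) a⁻¹

lemma mem_commC {S T : Subgroup G} {hT : T.Normal} {x : G} :
    x ∈ commC S T hT ↔ ∀ s ∈ S, x * s * x⁻¹ * s⁻¹ ∈ T := Iff.rfl

lemma commC_normal {S T : Subgroup G} (hS : S.Normal) (hT : T.Normal) :
    (commC S T hT).Normal := by
  constructor
  intro x hx g s hs
  have key : (g * x * g⁻¹) * s * (g * x * g⁻¹)⁻¹ * s⁻¹ =
      g * (x * (g⁻¹ * s * g) * x⁻¹ * (g⁻¹ * s * g)⁻¹) * g⁻¹ := by group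
  rw [key]
  refine hT.conj_mem _ (hx _ ?_) g
  have h2 := hS.conj_mem s hs g⁻¹
  simpa using h2

lemma commC_biC {p q : ℕ} {S T : Subgroup G} (hS : S.Normal) (hT : BiC p q T) :
    BiC p q (commC S T hT.1) := by
  have key : ∀ r : ℕ, clP r T ≤ T → clP r (commC S T hT.1) ≤ commC S T hT.1 := by
    intro r hcl x hx s hs
    refine hcl ?_
    rw [mem_clP]
    intro N hN
    obtain ⟨hNn, -⟩ := id hN
    obtain ⟨c, hc, n, hn, rfl⟩ := exists_mul_of_mem_sup hNn (mem_clP.mp hx N hN)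
    have keyid : (c * n) * s * (c * n)⁻¹ * s⁻¹ =
        (c * (n * s * n⁻¹ * s⁻¹) * c⁻¹) * (c * s * c⁻¹ * s⁻¹) := by group
    rw [keyid]
    have h1 : n * s * n⁻¹ * s⁻¹ ∈ N := by
      have h2 : n * s * n⁻¹ * s⁻¹ = n * (s * n⁻¹ * s⁻¹) := by group
      rw [h2]
      exact mul_mem hn (hNn.conj_mem _ (N.inv_mem hn) s)
    exact mul_mem
      (le_sup_right (α := Subgroup G) (a := T) (b := N) (hNn.conj_mem _ h1 c))
      (le_sup_left (α := Subgroup G) (a := T) (b := N) (hc s hs))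
  exact ⟨commC_normal hS hT.1, key p hT.2.1, key q hT.2.2⟩

/-- Key commutator lemma: commutators of elements of the bi-closure of `S` land in any
bi-closed `T` containing the commutators of `S`. -/
lemma bcl_comm {p q : ℕ} {S T : Subgroup G} (hS : S.Normal) (hT : BiC p q T)
    (hST : ∀ a ∈ S, ∀ b ∈ S, a * b * a⁻¹ * b⁻¹ ∈ T) :
    ∀ x ∈ bcl p q S, ∀ y ∈ bcl p q S, x * y * x⁻¹ * y⁻¹ ∈ T := by
  have hC1 : bcl p q S ≤ commC S T hT.1 :=
    bcl_le (commC_biC hS hT) (fun a ha b hb => hST a ha b hb)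
  have hC2 : bcl p q S ≤ commC (bcl p q S) T hT.1 := by
    refine bcl_le (commC_biC (bcl_normal p q S) hT) ?_
    intro s hs w hw
    have h1 : w * s * w⁻¹ * s⁻¹ ∈ T := hC1 hw s hs
    have key : s * w * s⁻¹ * w⁻¹ = (w * s * w⁻¹ * s⁻¹)⁻¹ := by group
    rw [key]
    exact T.inv_mem h1
  intro x hx y hy
  exact hC2 hx y hy

/-- Key root lemma: bi-closed subgroups are isolated. -/
lemma bic_root {p q : ℕ} (hp : p.Prime) (hq : q.Prime) (hpq : p ≠ q)
    {T : Subgroup G} (hT : BiC p q T) {x : G} {n : ℕ} (hn : n ≠ 0)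
    (hx : x ^ n ∈ T) : x ∈ T := by
  have main : ∀ r : ℕ, r.Prime → clP r T ≤ T → x ^ (r ^ n.factorization r) ∈ T := by
    intro r hr hcl
    refine hcl ?_
    rw [mem_clP]
    intro N hN
    obtain ⟨hNn, hfin, hpg⟩ := hN
    haveI := hNn
    haveI := hfin
    haveI hTN : (T ⊔ N).Normal := normal_sup hT.1 hNn
    have hsurj : Function.Surjective
        (QuotientGroup.map N (T ⊔ N) (MonoidHom.id G) (by simpa using le_sup_right)) := by
      intro y
      obtain ⟨g, rfl⟩ := QuotientGroup.mk'_surjective (T ⊔ N) y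
      exact ⟨QuotientGroup.mk g, rfl⟩
    have hK : IsPGroup r (G ⧸ (T ⊔ N)) := hpg.of_surjective _ hsurj
    have hξn : (QuotientGroup.mk x : G ⧸ (T ⊔ N)) ^ n = 1 := by
      rw [← QuotientGroup.mk_pow, QuotientGroup.eq_one_iff]
      exact le_sup_left (α := Subgroup G) (a := T) (b := N) hx
    obtain ⟨k, hk⟩ := hK (QuotientGroup.mk x)
    obtain ⟨j, hjk, hj⟩ := (Nat.dvd_prime_pow hr).mp (orderOf_dvd_of_pow_eq_one hk)
    have h2 : orderOf (QuotientGroup.mk x : G ⧸ (T ⊔ N)) ∣ n := orderOf_dvd_of_pow_eq_one hξn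
    have h3 : orderOf (QuotientGroup.mk x : G ⧸ (T ⊔ N)) ∣ r ^ n.factorization r := by
      rw [hj]
      refine pow_dvd_pow r ((Nat.Prime.pow_dvd_iff_le_factorization hr hn).mp ?_)
      rw [← hj]
      exact h2
    have h4 : (QuotientGroup.mk x : G ⧸ (T ⊔ N)) ^ (r ^ n.factorization r) = 1 :=
      orderOf_dvd_iff_pow_eq_one.mp h3
    rw [← QuotientGroup.mk_pow, QuotientGroup.eq_one_iff] at h4
    exact h4
  have hxp : x ^ (p ^ n.factorization p) ∈ T := main p hp hT.2.1
  have hxq : x ^ (q ^ n.factorization q) ∈ T := main q hq hT.2.2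
  have hab : Nat.Coprime (p ^ n.factorization p) (q ^ n.factorization q) :=
    Nat.Coprime.pow _ _ ((Nat.coprime_primes hp hq).mpr hpq)
  set a := p ^ n.factorization p with ha
  set b := q ^ n.factorization q with hb
  have hbez : (a : ℤ) * Nat.gcdA a b + (b : ℤ) * Nat.gcdB a b = 1 := by
    have := Nat.gcd_eq_gcd_ab a b
    rw [hab] at this
    exact_mod_cast this.symm
  have hx1 : x = (x ^ a) ^ Nat.gcdA a b * (x ^ b) ^ Nat.gcdB a b := by
    rw [← zpow_natCast x a, ← zpow_natCast x b, ← zpow_mul, ← zpow_mul, ← zpow_add,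
      hbez, zpow_one]
  rw [hx1]
  exact mul_mem (T.zpow_mem hxp _) (T.zpow_mem hxq _)

/-- Derived series bound through a subgroup. -/
lemma derivedSeries_le_map_subtype {Q : Type*} [Group Q] {A : Subgroup Q} {a : ℕ}
    (h : derivedSeries Q a ≤ A) (j : ℕ) :
    derivedSeries Q (a + j) ≤ (derivedSeries A j).map A.subtype := by
  induction j with
  | zero =>
    have h0 : (derivedSeries A 0).map A.subtype = A := by
      rw [derivedSeries_zero, ← MonoidHom.range_eq_map, Subgroup.range_subtype]
    rw [Nat.add_zero, h0]
    exact h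
  | succ j ih =>
    rw [← Nat.add_assoc, derivedSeries_succ, derivedSeries_succ, Subgroup.map_commutator]
    exact Subgroup.commutator_mono ih ih

lemma card_lt_of_ne_top {K : Type*} [Group K] [Finite K] {A : Subgroup K} (h : A ≠ ⊤) :
    Nat.card A < Nat.card K := by
  have hle : Nat.card A ≤ Nat.card K := Nat.card_le_card_of_injective _ A.subtype_injective
  rcases lt_or_eq_of_le hle with hlt | heq
  · exact hlt
  · exfalso
    have hbij : Function.Bijective A.subtype :=
      (Nat.bijective_iff_injective_and_card A.subtype).mpr ⟨A.subtype_injective, heq⟩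
    refine h ((Subgroup.eq_top_iff' A).mpr fun x => ?_)
    obtain ⟨⟨y, hy⟩, rfl⟩ := hbij.2 x
    exact hy

/-- A finite solvable group has derived length at most its cardinality. -/
lemma derivedSeries_card_eq_bot :
    ∀ (n : ℕ) (K : Type*) [Group K] [Finite K], IsSolvable K → Nat.card K ≤ n →
      derivedSeries K n = ⊥ := by
  intro n
  induction n with
  | zero =>
    intro K _ _ _ hcard
    exact absurd hcard (by simpa using Nat.card_pos.ne')
  | succ n ih =>
    intro K _ _ hs hcard
    by_cases h1 : derivedSeries K 1 = ⊤
    · have hall : ∀ j, derivedSeries K j = ⊤ := by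
        intro j
        induction j with
        | zero => rfl
        | succ j ihj =>
          have h2 : derivedSeries K (j + 1) = derivedSeries K 1 := by
            rw [derivedSeries_succ, ihj, derivedSeries_succ, derivedSeries_zero]
          rw [h2, h1]
      obtain ⟨k, hk⟩ := hs.solvable
      rw [hall k] at hk
      rw [hall (n + 1), hk]
    · have hlt : Nat.card (derivedSeries K 1) < Nat.card K := card_lt_of_ne_top h1
      haveI : Group.IsSolvable (derivedSeries K 1) := by
        haveI : Group.IsSolvable K := hs
        infer_instance
      have hD := ih (derivedSeries K 1) this
        (by omega : Nat.card (derivedSeries K 1) ≤ n)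
      have hstep : derivedSeries K (1 + n) ≤
          (derivedSeries (derivedSeries K 1) n).map (derivedSeries K 1).subtype :=
        derivedSeries_le_map_subtype le_rfl n
      rw [hD, Subgroup.map_bot] at hstep
      rw [Nat.add_comm] at hstep
      exact le_bot_iff.mp hstep


variable {G : Type*} [Group G]

/-- Under a solvable normal subgroup of finite index, the derived series of `G` lands in
every kernel of a finite `p`-quotient, after uniformly many steps. -/
lemma derivedSeries_le_pker {H : Subgroup G} (hHn : H.Normal)
    {d : ℕ} (hd : derivedSeries H d = ⊥) (hfinH : Finite (G ⧸ H))
    {p : ℕ} (hp : p.Prime) {N : Subgroup G} (hN : PKer p N) :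
    derivedSeries G (Nat.card (G ⧸ H) + d) ≤ N := by
  obtain ⟨hNn, hfinN, hpg⟩ := hN
  haveI := hNn
  haveI := hfinN
  haveI := hHn
  set π := QuotientGroup.mk' N with hπdef
  have hπ : Function.Surjective π := QuotientGroup.mk'_surjective N
  set Hb := H.map π with hHbdef
  haveI hHbn : Hb.Normal := hHn.map π hπ
  haveI : Finite ((G ⧸ N) ⧸ Hb) := Quotient.finite _
  set ψ : G →* ((G ⧸ N) ⧸ Hb) := (QuotientGroup.mk' Hb).comp π with hψdef
  have hψs : Function.Surjective ψ := (QuotientGroup.mk'_surjective Hb).comp hπ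
  have hker : H ≤ ψ.ker := by
    intro h hh
    have h1 : π h ∈ Hb := Subgroup.mem_map_of_mem π hh
    have h2 : ψ h = (QuotientGroup.mk' Hb) (π h) := rfl
    rw [MonoidHom.mem_ker, h2, QuotientGroup.mk'_apply, QuotientGroup.eq_one_iff]
    exact h1
  have hfs : Function.Surjective (QuotientGroup.lift H ψ hker) := by
    intro y
    obtain ⟨g, rfl⟩ := hψs y
    exact ⟨QuotientGroup.mk g, rfl⟩
  have hcard : Nat.card ((G ⧸ N) ⧸ Hb) ≤ Nat.card (G ⧸ H) :=
    Nat.card_le_card_of_surjective _ hfs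
  -- the top quotient is a finite p-group, hence solvable
  haveI : Fact p.Prime := ⟨hp⟩
  have hpgq : IsPGroup p ((G ⧸ N) ⧸ Hb) := hpg.to_quotient Hb
  haveI : Group.IsNilpotent ((G ⧸ N) ⧸ Hb) := hpgq.isNilpotent
  haveI : Group.IsSolvable ((G ⧸ N) ⧸ Hb) := inferInstance
  have h1 : derivedSeries ((G ⧸ N) ⧸ Hb) (Nat.card (G ⧸ H)) = ⊥ :=
    derivedSeries_card_eq_bot (Nat.card (G ⧸ H)) _ this hcard
  have h2 : derivedSeries (G ⧸ N) (Nat.card (G ⧸ H)) ≤ Hb := by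
    have h3 := map_derivedSeries_eq (QuotientGroup.mk'_surjective Hb) (Nat.card (G ⧸ H))
    rw [h1] at h3
    have h4 := (Subgroup.map_eq_bot_iff _).mp h3
    rwa [QuotientGroup.ker_mk'] at h4
  have h3 : derivedSeries Hb d = ⊥ := by
    have hsur := MonoidHom.subgroupMap_surjective π H
    have h5 := map_derivedSeries_eq hsur d
    rw [hd, Subgroup.map_bot] at h5
    exact h5.symm
  have h4 : derivedSeries (G ⧸ N) (Nat.card (G ⧸ H) + d) = ⊥ := by
    have h6 := derivedSeries_le_map_subtype h2 d
    rw [h3, Subgroup.map_bot] at h6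
    exact le_bot_iff.mp h6
  have h5 := map_derivedSeries_eq hπ (Nat.card (G ⧸ H) + d)
  rw [h4] at h5
  have h6 := (Subgroup.map_eq_bot_iff _).mp h5
  rwa [QuotientGroup.ker_mk'] at h6

/-- Residual `p`-ness plus solvable-by-finite makes `G` solvable with an explicit bound. -/
lemma derivedSeries_global_bot {H : Subgroup G} (hHn : H.Normal)
    {d : ℕ} (hd : derivedSeries H d = ⊥) (hfinH : Finite (G ⧸ H))
    {p : ℕ} (hp : p.Prime) (hrp : IsResiduallyFinitePGroup p G) :
    derivedSeries G (Nat.card (G ⧸ H) + d) = ⊥ := by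
  rw [eq_bot_iff]
  intro x hx
  rw [Subgroup.mem_bot]
  by_contra hx1
  obtain ⟨N, hN, hxN, h2⟩ := hrp x hx1
  exact hxN (derivedSeries_le_pker hHn hd hfinH hp ⟨hN, h2⟩ hx)

end Stmt4Aux

open Stmt4Aux

/-- Let `p ≠ q` be primes and `G` a solvable-by-finite group.  If `G` is a
residually finite `p`-group and a residually finite `q`-group, then `G` has a
finite series `1 = G₀ ⊴ G₁ ⊴ ⋯ ⊴ Gₙ = G` with each `Gᵢ` normal in `G` and each
quotient `G_{i+1}/G_i` torsion-free abelian (expressed elementwise: commutators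
of elements of `G_{i+1}` lie in `Gᵢ`, and if a positive power of an element of
`G_{i+1}` lies in `Gᵢ` then so does the element itself). -/
theorem stmt_4 (p q : ℕ) (hp : p.Prime) (hq : q.Prime) (hpq : p ≠ q)
    (G : Type*) [Group G]
    (hsf : ∃ H : Subgroup G, H.Normal ∧ IsSolvable H ∧ H.FiniteIndex)
    (hrp : IsResiduallyFinitePGroup p G) (hrq : IsResiduallyFinitePGroup q G) :
    ∃ (n : ℕ) (c : Fin (n + 1) → Subgroup G),
      c 0 = ⊥ ∧ c (Fin.last n) = ⊤ ∧
      (∀ i : Fin (n + 1), (c i).Normal) ∧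
      (∀ i : Fin n, c i.castSucc ≤ c i.succ) ∧
      (∀ i : Fin n, ∀ x y : G, x ∈ c i.succ → y ∈ c i.succ →
        x * y * x⁻¹ * y⁻¹ ∈ c i.castSucc) ∧
      (∀ i : Fin n, ∀ x : G, x ∈ c i.succ → ∀ k : ℕ, k ≠ 0 →
        x ^ k ∈ c i.castSucc → x ∈ c i.castSucc) := by
  classical
  obtain ⟨H, hHn, hHs, hHfi⟩ := hsf
  obtain ⟨d, hd⟩ := hHs.solvable
  have hfinH : Finite (G ⧸ H) :=
    Nat.finite_of_card_ne_zero (by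
      have := hHfi.index_ne_zero
      rwa [Subgroup.index] at this)
  set m : ℕ := Nat.card (G ⧸ H) + d with hm
  have hsolv : derivedSeries G m = ⊥ := derivedSeries_global_bot hHn hd hfinH hp hrp
  refine ⟨m, fun i => bcl p q (derivedSeries G (m - (i : ℕ))), ?_, ?_, ?_, ?_, ?_, ?_⟩
  · -- c 0 = ⊥
    simp only [Fin.val_zero, Nat.sub_zero]
    rw [hsolv, bcl_bot p q hrp hrq]
  · -- c last = ⊤
    simp only [Fin.val_last, Nat.sub_self]
    rw [derivedSeries_zero, bcl_top]
  · -- normality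
    intro i
    exact bcl_normal p q _
  · -- monotone
    intro i
    simp only [Fin.coe_castSucc, Fin.val_succ]
    refine bcl_mono ?_
    have h1 : m - (i : ℕ) = (m - ((i : ℕ) + 1)) + 1 := by
      have : (i : ℕ) < m := i.isLt
      omega
    rw [h1, derivedSeries_succ]
    haveI : (derivedSeries G (m - ((i : ℕ) + 1))).Normal := derivedSeries_normal G _
    exact Subgroup.commutator_le_left _ _
  · -- commutators
    intro i x y hx hy
    simp only [Fin.coe_castSucc, Fin.val_succ] at hx hy ⊢
    have h1 : m - (i : ℕ) = (m - ((i : ℕ) + 1)) + 1 := by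
      have : (i : ℕ) < m := i.isLt
      omega
    rw [h1]
    refine bcl_comm (derivedSeries_normal G _) (bcl_biC p q _) ?_ x hx y hy
    intro a ha b hb
    refine le_bcl p q _ ?_
    rw [derivedSeries_succ]
    have := Subgroup.commutator_mem_commutator ha hb
    simpa [commutatorElement_def] using this
  · -- roots
    intro i x _hx k hk hxk
    simp only [Fin.coe_castSucc] at hxk ⊢
    exact bic_root hp hq hpq (bcl_biC p q _) hk hxk
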